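/- Let (Ω, F, P) be a probability space, (E, d) a metric space, and X, X_n : Ω → E measurable. Assume there is a P-null set N such that X(Ω \ N) is separable, and that E|f(X) − f(X_n)| → 0 for every bounded measurable f : E → ℝ. Then (a) P*(d(X, X_n) ≥ ε) → 0 for all ε > 0, and (b) P_{X_n}(O) → P_X(O) for every open O ⊆ E. -/

import Mathlib

open MeasureTheory Filter Topology

lemma aux_integrable {Ω : Type*} [MeasurableSpace Ω] (P : Measure Ω) [IsFiniteMeasure P]
    {g : Ω → ℝ} (hg : Measurable g) {C : ℝ} (hC : ∀ ω, |g ω| ≤ C) : Integrable g P := by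
  refine (integrable_const C).mono' hg.aestronglyMeasurable ?_
  filter_upwards with ω
  simpa [Real.norm_eq_abs] using hC ω

/-- if `X(Ω \ N)` is separable for some null set `N` and
`E|f(X) - f(Xn)| → 0` for all bounded measurable `f`, then `Xn → X` in outer
probability and the laws converge on open sets. -/
theorem stmt_1
    {Ω : Type*} [MeasurableSpace Ω] (P : Measure Ω) [IsProbabilityMeasure P]
    {E : Type*} [MetricSpace E] [MeasurableSpace E] [BorelSpace E]
    (X : Ω → E) (Xn : ℕ → Ω → E)
    (hX : Measurable X) (hXn : ∀ n, Measurable (Xn n))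
    (N : Set Ω) (hN : P N = 0) (hsep : TopologicalSpace.IsSeparable (X '' Nᶜ))
    (hconv : ∀ f : E → ℝ, Measurable f → (∃ C : ℝ, ∀ x, |f x| ≤ C) →
      Tendsto (fun n => ∫ ω, |f (X ω) - f (Xn n ω)| ∂P) atTop (𝓝 0)) :
    (∀ ε > (0 : ℝ),
      Tendsto (fun n => P {ω | ε ≤ dist (X ω) (Xn n ω)}) atTop (𝓝 0)) ∧
    (∀ O : Set E, IsOpen O →
      Tendsto (fun n => Measure.map (Xn n) P O) atTop (𝓝 (Measure.map X P O))) := by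
  constructor
  ·
    intro ε hε
    -- Nᶜ is nonempty
    have hNne : Nᶜ.Nonempty := by
      rw [Set.nonempty_compl]
      intro h
      rw [h, measure_univ] at hN
      exact one_ne_zero hN
    obtain ⟨ω₀, hω₀⟩ := hNne
    obtain ⟨c, hc_count, hc_sub⟩ := hsep
    obtain ⟨e, he⟩ := Set.Countable.exists_eq_range (hc_count.insert (X ω₀))
      (Set.insert_nonempty _ _)
    set V : ℕ → Set Ω := fun k => X ⁻¹' Metric.ball (e k) (ε / 3) with hV
    have hVmeas : ∀ k, MeasurableSet (V k) := fun k => hX Metric.isOpen_ball.measurableSet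
    have hcover : Nᶜ ⊆ ⋃ k, V k := by
      intro ω hω
      have hXω : X ω ∈ closure (insert (X ω₀) c) :=
        closure_mono (Set.subset_insert _ _) (hc_sub ⟨ω, hω, rfl⟩)
      rw [Metric.mem_closure_iff] at hXω
      obtain ⟨b, hb, hdist⟩ := hXω (ε / 3) (by positivity)
      rw [he] at hb
      obtain ⟨k, rfl⟩ := hb
      exact Set.mem_iUnion.2 ⟨k, by simpa [hV, Metric.mem_ball] using hdist⟩
    -- bump functions
    set f : ℕ → E → ℝ := fun k x => max 0 (1 - 3 / ε * max 0 (dist x (e k) - ε / 3)) with hf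
    have hfm : ∀ k, Measurable (f k) := by
      intro k
      apply Continuous.measurable
      fun_prop
    have hfb : ∀ k x, |f k x| ≤ 1 := by
      intro k x
      rw [abs_le]
      constructor
      · linarith [le_max_left (0:ℝ) (1 - 3 / ε * max 0 (dist x (e k) - ε / 3))]
      · apply max_le zero_le_one
        have h1 : (0:ℝ) ≤ 3 / ε * max 0 (dist x (e k) - ε / 3) := by positivity
        linarith
    have hone : ∀ k x, dist x (e k) < ε / 3 → f k x = 1 := by
      intro k x h
      have : max 0 (dist x (e k) - ε / 3) = 0 := max_eq_left (by linarith)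
      simp [hf, this]
    have hzero : ∀ k x, 2 * ε / 3 ≤ dist x (e k) → f k x = 0 := by
      intro k x h
      have h1 : max 0 (dist x (e k) - ε / 3) = dist x (e k) - ε / 3 :=
        max_eq_right (by linarith)
      have h2 : (1:ℝ) ≤ 3 / ε * (dist x (e k) - ε / 3) := by
        rw [div_mul_eq_mul_div, le_div_iff₀ hε]
        nlinarith
      apply max_eq_left
      rw [h1]; linarith
    set b : ℕ → ℕ → ℝ := fun k n => ∫ ω, |f k (X ω) - f k (Xn n ω)| ∂P with hbdef
    have hb : ∀ k, Tendsto (b k) atTop (𝓝 0) := fun k => hconv (f k) (hfm k) ⟨1, hfb k⟩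
    set A : ℕ → Set Ω := fun n => {ω | ε ≤ dist (X ω) (Xn n ω)} with hA
    -- key bound
    have hkey : ∀ k n, P (A n ∩ V k) ≤ ENNReal.ofReal (b k n) := by
      intro k n
      set g : Ω → ENNReal := fun ω => ENNReal.ofReal |f k (X ω) - f k (Xn n ω)| with hg
      have hgm : Measurable g := by
        apply ENNReal.measurable_ofReal.comp
        exact (((hfm k).comp hX).sub ((hfm k).comp (hXn n))).abs
      have hsub : A n ∩ V k ⊆ {ω | 1 ≤ g ω} := by
        rintro ω ⟨hω1, hω2⟩
        have hd1 : dist (X ω) (e k) < ε / 3 := by simpa [hV, Metric.mem_ball] using hω2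
        have hd2 : 2 * ε / 3 ≤ dist (Xn n ω) (e k) := by
          have htri := dist_triangle (X ω) (Xn n ω) (e k)
          have := hω1
          simp only [hA, Set.mem_setOf_eq] at this
          have hsymm : dist (X ω) (Xn n ω) ≤ dist (X ω) (e k) + dist (Xn n ω) (e k) := by
            rw [← dist_comm (e k) (Xn n ω)] at htri ⊢
            exact dist_triangle _ _ _
          linarith
        have : g ω = 1 := by
          rw [hg]
          simp only [hone k _ hd1, hzero k _ hd2]
          norm_num
        rw [Set.mem_setOf_eq, this]
      calc P (A n ∩ V k) ≤ P {ω | 1 ≤ g ω} := measure_mono hsub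
        _ = 1 * P {ω | 1 ≤ g ω} := (one_mul _).symm
        _ ≤ ∫⁻ ω, g ω ∂P := mul_meas_ge_le_lintegral₀ hgm.aemeasurable 1
        _ = ENNReal.ofReal (b k n) := by
            rw [hg, hbdef, ofReal_integral_eq_lintegral_ofReal]
            · exact aux_integrable P
                ((((hfm k).comp hX).sub ((hfm k).comp (hXn n))).abs) (C := 2)
                (fun ω => by
                  rw [abs_abs]
                  calc |f k (X ω) - f k (Xn n ω)| ≤ |f k (X ω)| + |f k (Xn n ω)| := abs_sub _ _
                    _ ≤ 2 := by linarith [hfb k (X ω), hfb k (Xn n ω)])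
            · filter_upwards with ω using abs_nonneg _
    -- tail of the cover
    have htail : Tendsto (fun K => P ((⋃ k ∈ Finset.range K, V k)ᶜ)) atTop (𝓝 0) := by
      have h0 : P (⋂ K, (⋃ k ∈ Finset.range K, V k)ᶜ) = 0 := by
        have heq : (⋂ K, (⋃ k ∈ Finset.range K, V k)ᶜ) = (⋃ k, V k)ᶜ := by
          ext ω
          simp only [Set.mem_iInter, Set.mem_compl_iff, Set.mem_iUnion, Finset.mem_range, not_exists]
          constructor
          · intro h k hk
            exact h (k + 1) k (Nat.lt_succ_self k) hk
          · intro h K k _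
            exact h k
        rw [heq]
        exact measure_mono_null (Set.compl_subset_comm.1 hcover) hN
      have := tendsto_measure_iInter_atTop
        (μ := P) (s := fun K => (⋃ k ∈ Finset.range K, V k)ᶜ)
        (fun K => ((MeasurableSet.biUnion (Finset.range K).countable_toSet
          (fun k _ => hVmeas k)).compl).nullMeasurableSet)
        (fun i j hij => Set.compl_subset_compl.2 (by
          intro ω hω
          simp only [Set.mem_iUnion, Finset.mem_range] at hω ⊢
          obtain ⟨k, hk, h⟩ := hω
          exact ⟨k, lt_of_lt_of_le hk hij, h⟩))
        ⟨0, measure_ne_top _ _⟩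
      rwa [h0] at this
    -- main argument
    rw [ENNReal.tendsto_nhds_zero]
    intro δ hδ
    have hδ2 : (0:ENNReal) < δ / 2 := ENNReal.half_pos hδ.ne'
    obtain ⟨K, hK⟩ := (htail.eventually_lt_const hδ2).exists
    have hsum : Tendsto (fun n => ∑ k ∈ Finset.range K, ENNReal.ofReal (b k n)) atTop (𝓝 0) := by
      have : Tendsto (fun n => ∑ k ∈ Finset.range K, ENNReal.ofReal (b k n)) atTop
          (𝓝 (∑ k ∈ Finset.range K, ENNReal.ofReal 0)) :=
        tendsto_finset_sum _ (fun k _ => ENNReal.tendsto_ofReal (hb k))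
      simpa using this
    filter_upwards [hsum.eventually_le_const hδ2] with n hn
    have hsubset : A n ⊆ (⋃ k ∈ Finset.range K, V k)ᶜ ∪ ⋃ k ∈ Finset.range K, (A n ∩ V k) := by
      intro ω hω
      by_cases h : ω ∈ ⋃ k ∈ Finset.range K, V k
      · right
        obtain ⟨k, hk, hωk⟩ := Set.mem_iUnion₂.1 h
        exact Set.mem_iUnion₂.2 ⟨k, hk, hω, hωk⟩
      · exact Or.inl h
    calc P (A n) ≤ P ((⋃ k ∈ Finset.range K, V k)ᶜ ∪ ⋃ k ∈ Finset.range K, (A n ∩ V k)) :=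
          measure_mono hsubset
      _ ≤ P ((⋃ k ∈ Finset.range K, V k)ᶜ) + P (⋃ k ∈ Finset.range K, (A n ∩ V k)) :=
          measure_union_le _ _
      _ ≤ P ((⋃ k ∈ Finset.range K, V k)ᶜ) + ∑ k ∈ Finset.range K, P (A n ∩ V k) := by
          gcongr
          exact measure_biUnion_finset_le _ _
      _ ≤ δ / 2 + ∑ k ∈ Finset.range K, ENNReal.ofReal (b k n) :=
          add_le_add hK.le (Finset.sum_le_sum fun k _ => hkey k n)
      _ ≤ δ / 2 + δ / 2 := by gcongr
      _ = δ := ENNReal.add_halves δ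
  ·
    intro O hO
    set f : E → ℝ := O.indicator fun _ => 1 with hfdef
    have hfm : Measurable f := measurable_const.indicator hO.measurableSet
    have hfb : ∀ x, |f x| ≤ 1 := by
      intro x; by_cases h : x ∈ O <;> simp [hfdef, Set.indicator_of_mem, Set.indicator_of_notMem, h]
    have hmain := hconv f hfm ⟨1, hfb⟩
    have hiX : Integrable (fun ω => f (X ω)) P :=
      aux_integrable P (hfm.comp hX) (fun ω => hfb _)
    have hiXn : ∀ n, Integrable (fun ω => f (Xn n ω)) P :=
      fun n => aux_integrable P (hfm.comp (hXn n)) (fun ω => hfb _)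
    have key : ∀ g : Ω → E, Measurable g → (∫ ω, f (g ω) ∂P) = (P (g ⁻¹' O)).toReal := by
      intro g hg
      have h1 : (fun ω => f (g ω)) = (g ⁻¹' O).indicator (1 : Ω → ℝ) := by
        ext ω; by_cases h : g ω ∈ O <;> simp [hfdef, h]
      rw [h1, integral_indicator_one (hg hO.measurableSet)]; rfl
    have h1 : Tendsto (fun n => (P ((Xn n) ⁻¹' O)).toReal) atTop (𝓝 (P (X ⁻¹' O)).toReal) := by
      rw [tendsto_iff_norm_sub_tendsto_zero]
      refine squeeze_zero (fun n => norm_nonneg _) (fun n => ?_) hmain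
      rw [← key _ (hXn n), ← key _ hX]
      calc ‖∫ ω, f (Xn n ω) ∂P - ∫ ω, f (X ω) ∂P‖
          = ‖∫ ω, (f (Xn n ω) - f (X ω)) ∂P‖ := by rw [integral_sub (hiXn n) hiX]
        _ ≤ ∫ ω, ‖f (Xn n ω) - f (X ω)‖ ∂P := norm_integral_le_integral_norm _
        _ = ∫ ω, |f (X ω) - f (Xn n ω)| ∂P := by
            congr 1; ext ω; rw [Real.norm_eq_abs, abs_sub_comm]
    have h2 : Tendsto (fun n => P ((Xn n) ⁻¹' O)) atTop (𝓝 (P (X ⁻¹' O))) := by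
      rw [← ENNReal.tendsto_toReal_iff (fun n => measure_ne_top P _) (measure_ne_top P _)]
      exact h1
    simpa [Measure.map_apply (hXn _) hO.measurableSet, Measure.map_apply hX hO.measurableSet] using h2
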